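/- Let A be a commutative ring, I an ideal of A, and a ∈ A, i ∈ I. The element (a, a+i) of the amalgamated duplication A ⋈ I = {(x, x+j) : x ∈ A, j ∈ I} (a subring of A × A) is a unit of A ⋈ I if and only if both a and a+i are units in A. -/

import Mathlib

/-- The amalgamated duplication `A ⋈ I` as a subring of `A × A`. -/
def amalgDup (A : Type*) [CommRing A] (I : Ideal A) : Subring (A × A) where
  carrier := {x | x.2 - x.1 ∈ I}
  one_mem' := by simp
  zero_mem' := by simp
  add_mem' := fun {x y} hx hy => by
    simpa [add_sub_add_comm] using I.add_mem hx hy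
  neg_mem' := fun {x} hx => by
    simpa [neg_sub', sub_eq_add_neg, add_comm] using I.neg_mem hx
  mul_mem' := fun {x y} hx hy => by
    have : (x * y).2 - (x * y).1 = x.2 * (y.2 - y.1) + y.1 * (x.2 - x.1) := by
      simp [Prod.mul_def]; ring
    rw [Set.mem_setOf_eq, this]
    exact I.add_mem (I.mul_mem_left _ hy) (I.mul_mem_left _ hx)

theorem stmt_19 {A : Type*} [CommRing A] (I : Ideal A) (a : A) (i : A)
    (hi : i ∈ I) :
    IsUnit (⟨(a, a + i), by show a + i - a ∈ I; simpa using hi⟩ : amalgDup A I) ↔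
      IsUnit a ∧ IsUnit (a + i) := by
  constructor
  · intro h
    constructor
    · have := h.map ((RingHom.fst A A).comp (amalgDup A I).subtype)
      simpa using this
    · have := h.map ((RingHom.snd A A).comp (amalgDup A I).subtype)
      simpa using this
  · rintro ⟨⟨u, hu⟩, ⟨v, hv⟩⟩
    have hmem : ((↑u⁻¹, ↑v⁻¹) : A × A) ∈ amalgDup A I := by
      show (↑v⁻¹ : A) - ↑u⁻¹ ∈ I
      have key : (↑v⁻¹ : A) - ↑u⁻¹ = -(↑u⁻¹ * ↑v⁻¹ * i) := by
        have h1 : (↑u : A) * ↑u⁻¹ = 1 := u.mul_inv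
        have h2 : (↑v : A) * ↑v⁻¹ = 1 := v.mul_inv
        have : (↑v⁻¹ : A) - ↑u⁻¹ = ↑v⁻¹ * (↑u * ↑u⁻¹) - ↑u⁻¹ * (↑v * ↑v⁻¹) := by
          rw [h1, h2]; ring
        rw [this, hu, hv]; ring
      rw [key]
      exact I.neg_mem (I.mul_mem_left _ hi)
    refine IsUnit.of_mul_eq_one (a := _) ⟨(↑u⁻¹, ↑v⁻¹), hmem⟩ ?_
    ext
    · show a * ↑u⁻¹ = 1
      rw [← hu]; exact u.mul_inv
    · show (a + i) * ↑v⁻¹ = 1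
      rw [← hv]; exact v.mul_inv
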